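/- For every real y ≥ 0, one has 2√π · y · erfc(−y) · erfc(y) · e^{y²} − 4·erf(y) ≤ 0. -/

import Mathlib

open Real MeasureTheory

/-- erf(x) = (2/√π)·∫_0^x e^{−t²} dt -/
noncomputable def erf (x : ℝ) : ℝ := (2 / Real.sqrt Real.pi) * ∫ t in (0:ℝ)..x, Real.exp (-t ^ 2)

/-- erfc(x) = (2/√π)·∫_x^∞ e^{−t²} dt -/
noncomputable def erfc (x : ℝ) : ℝ := (2 / Real.sqrt Real.pi) * ∫ t in Set.Ioi x, Real.exp (-t ^ 2)

open Set Filter Topology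


noncomputable def u (y : ℝ) : ℝ := ∫ t in (0:ℝ)..y, Real.exp (-t ^ 2)

lemma Ecp : Continuous (fun t : ℝ => Real.exp (-t ^ 2)) := by continuity

lemma hint : MeasureTheory.Integrable (fun t : ℝ => Real.exp (-t ^ 2)) := by
  have := integrable_exp_neg_mul_sq (b := 1) one_pos
  simpa using this

lemma hu (y : ℝ) : HasDerivAt u (Real.exp (-y ^ 2)) y :=
  intervalIntegral.integral_hasDerivAt_right hint.intervalIntegrable
    (Ecp.stronglyMeasurableAtFilter _ _) Ecp.continuousAt

lemma Ioi0 : ∫ t in Ioi (0:ℝ), Real.exp (-t ^ 2) = Real.sqrt π / 2 := by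
  have := integral_gaussian_Ioi 1
  simpa using this

lemma split (a b : ℝ) (hab : a ≤ b) : ∫ t in Ioi a, Real.exp (-t ^ 2)
    = (∫ t in a..b, Real.exp (-t ^ 2)) + ∫ t in Ioi b, Real.exp (-t ^ 2) := by
  rw [intervalIntegral.integral_of_le hab, ← setIntegral_union _ measurableSet_Ioi
    hint.integrableOn hint.integrableOn, Ioc_union_Ioi_eq_Ioi hab]
  exact Ioc_disjoint_Ioi le_rfl

lemma usplit (y : ℝ) (hy : 0 ≤ y) :
    ∫ t in Ioi y, Real.exp (-t ^ 2) = Real.sqrt π / 2 - u y := by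
  have := split 0 y hy
  rw [Ioi0] at this; rw [u]; linarith

lemma unonneg (y : ℝ) (hy : 0 ≤ y) : 0 ≤ u y := by
  rw [u, intervalIntegral.integral_of_le hy]
  positivity

lemma G_nonneg (y : ℝ) : 0 ≤ ∫ t in Ioi y, Real.exp (-t ^ 2) := by positivity

lemma u_le (y : ℝ) (hy : 0 ≤ y) : u y ≤ Real.sqrt π / 2 := by
  have := usplit y hy; have := G_nonneg y; linarith

lemma neg_split (y : ℝ) (hy : 0 ≤ y) :
    ∫ t in Ioi (-y), Real.exp (-t ^ 2) = Real.sqrt π / 2 + u y := by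
  have h := split (-y) 0 (by linarith)
  rw [Ioi0] at h
  have h2 : (∫ t in (-y)..(0:ℝ), Real.exp (-t ^ 2)) = u y := by
    rw [show (0:ℝ) = -(-0) by norm_num] at h ⊢
    rw [← intervalIntegral.integral_comp_neg (a := -0) (b := y) (fun t => Real.exp (-t^2))]
    simp [u]
  rw [h, h2]; ring

lemma uLim : Tendsto u atTop (𝓝 (Real.sqrt π / 2)) := by
  have := intervalIntegral_tendsto_integral_Ioi 0 hint.integrableOn tendsto_id
  rwa [Ioi0] at this


lemma Elim : Tendsto (fun y : ℝ => Real.exp (-y ^ 2)) atTop (𝓝 0) := by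
  apply Real.tendsto_exp_atBot.comp
  apply tendsto_neg_atBot_iff.mpr
  exact tendsto_pow_atTop (by norm_num)

lemma gderiv (x : ℝ) : HasDerivAt (fun t : ℝ => -Real.exp (-t ^ 2) / 2)
    (x * Real.exp (-x ^ 2)) x := by
  have h : HasDerivAt (fun t : ℝ => Real.exp (-t ^ 2)) (-(2*x) * Real.exp (-x ^ 2)) x := by
    have h1 : HasDerivAt (fun t : ℝ => -t ^ 2) (-(2*x)) x := by
      simpa using ((hasDerivAt_pow 2 x).fun_neg)
    have := h1.exp
    convert this using 1; ring
  convert (h.neg.div_const 2) using 1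
  rfl; rfl; rfl
  ring

lemma glim : Tendsto (fun t : ℝ => -Real.exp (-t ^ 2) / 2) atTop (𝓝 0) := by
  have := (Elim.neg).div_const 2
  simpa using this

lemma tail_integrable (y : ℝ) (hy : 0 ≤ y) :
    IntegrableOn (fun t : ℝ => t * Real.exp (-t ^ 2)) (Ioi y) := by
  apply integrableOn_Ioi_deriv_of_nonneg
    (Continuous.continuousWithinAt (by continuity))
    (fun x _ => gderiv x)
  · intro x hx
    have : (0:ℝ) < x := lt_of_le_of_lt hy hx
    positivity
  · exact glim

lemma tail_eq (y : ℝ) (hy : 0 ≤ y) :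
    ∫ t in Ioi y, t * Real.exp (-t ^ 2) = Real.exp (-y ^ 2) / 2 := by
  rw [integral_Ioi_of_hasDerivAt_of_tendsto (Continuous.continuousWithinAt (by continuity))
    (fun x _ => gderiv x) (tail_integrable y hy) glim]
  ring

lemma tail_bound (y : ℝ) (hy : 0 ≤ y) :
    y * ∫ t in Ioi y, Real.exp (-t ^ 2) ≤ Real.exp (-y ^ 2) / 2 := by
  have hint : MeasureTheory.Integrable (fun t : ℝ => Real.exp (-t ^ 2)) := by
    simpa using integrable_exp_neg_mul_sq (b := 1) one_pos
  rw [← integral_const_mul, ← tail_eq y hy]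
  apply setIntegral_mono_on (hint.integrableOn.const_mul y) (tail_integrable y hy)
    measurableSet_Ioi
  intro x hx
  have hx' : y ≤ x := le_of_lt hx
  have := Real.exp_pos (-x ^ 2)
  nlinarith





lemma hE (x : ℝ) : HasDerivAt (fun t : ℝ => Real.exp (-t ^ 2))
    (-(2*x) * Real.exp (-x ^ 2)) x := by
  have h1 : HasDerivAt (fun t : ℝ => -t ^ 2) (-(2*x)) x := by
    simpa using ((hasDerivAt_pow 2 x).fun_neg)
  have := h1.exp
  convert this using 1; ring

noncomputable def k (y : ℝ) : ℝ := u y - 2 * y * Real.exp (-y ^ 2)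

lemma hk (x : ℝ) : HasDerivAt k (Real.exp (-x ^ 2) * (4 * x ^ 2 - 1)) x := by
  have h := (hu x).sub (((hasDerivAt_id x).const_mul 2).mul (hE x))
  convert h using 1
  rfl; rfl; rfl
  simp; ring

noncomputable def Fd (y : ℝ) : ℝ := Real.exp (-y ^ 2) ^ 2 + (u y) ^ 2 - π / 4

lemma hFd (x : ℝ) : HasDerivAt Fd (2 * Real.exp (-x ^ 2) * k x) x := by
  have h := (((hE x).pow 2).add ((hu x).pow 2)).sub_const (π / 4)
  convert h using 1
  rfl; rfl; rfl
  simp [k]; ring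

noncomputable def F (y : ℝ) : ℝ :=
  u y * Real.exp (-y ^ 2) + y * (u y) ^ 2 - π / 4 * y

lemma hF (x : ℝ) : HasDerivAt F (Fd x) x := by
  have h := (((hu x).mul (hE x)).add ((hasDerivAt_id x).mul ((hu x).pow 2))).sub
    ((hasDerivAt_id x).const_mul (π / 4))
  convert h using 1
  rfl; rfl; rfl
  simp [Fd]; ring

lemma ucont : Continuous u :=
  continuous_iff_continuousAt.mpr fun x => (hu x).continuousAt

lemma kcont : Continuous k := by
  have : Continuous (fun t : ℝ => Real.exp (-t ^ 2)) := by continuity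
  exact ucont.sub ((continuous_const.mul continuous_id).mul this)

lemma k_zero : k 0 = 0 := by simp [k, u]

lemma k_anti : AntitoneOn k (Icc 0 (1/2 : ℝ)) := by
  apply antitoneOn_of_deriv_nonpos (convex_Icc _ _) kcont.continuousOn
    (fun x _ => (hk x).differentiableAt.differentiableWithinAt)
  intro x hx
  rw [interior_Icc] at hx
  rw [(hk x).deriv]
  have h1 : 4 * x ^ 2 - 1 ≤ 0 := by nlinarith [hx.1, hx.2]
  have h2 := Real.exp_pos (-x ^ 2)
  nlinarith

lemma k_mono : StrictMonoOn k (Ici (1/2 : ℝ)) := by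
  apply strictMonoOn_of_deriv_pos (convex_Ici _) kcont.continuousOn
  intro x hx
  rw [interior_Ici] at hx
  rw [(hk x).deriv]
  have h1 : 0 < 4 * x ^ 2 - 1 := by nlinarith [hx.out]
  have h2 := Real.exp_pos (-x ^ 2)
  nlinarith

lemma u_two_pos : Real.exp (-1) ≤ u 2 := by
  have h1 : u 2 = (∫ t in (0:ℝ)..1, Real.exp (-t ^ 2)) + ∫ t in (1:ℝ)..2, Real.exp (-t ^ 2) := by
    rw [u, ← intervalIntegral.integral_add_adjacent_intervals
      (Ecp.intervalIntegrable 0 1) (Ecp.intervalIntegrable 1 2)]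
  have h2 : (0:ℝ) ≤ ∫ t in (1:ℝ)..2, Real.exp (-t ^ 2) :=
    intervalIntegral.integral_nonneg one_le_two (fun x _ => (Real.exp_pos _).le)
  have h3 : (∫ t in (0:ℝ)..1, Real.exp (-1 : ℝ)) ≤ ∫ t in (0:ℝ)..1, Real.exp (-t ^ 2) := by
    apply intervalIntegral.integral_mono_on zero_le_one
      (intervalIntegrable_const) (Ecp.intervalIntegrable 0 1)
    intro x hx
    apply Real.exp_le_exp.mpr
    nlinarith [hx.1, hx.2]
  simp at h3
  linarith

lemma k_two_pos : 0 < k 2 := by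
  have h1 := u_two_pos
  have h2 : Real.exp (-4 : ℝ) = Real.exp (-1) * Real.exp (-1) * Real.exp (-1) * Real.exp (-1) := by
    rw [← Real.exp_add, ← Real.exp_add, ← Real.exp_add]; norm_num
  have h3 : Real.exp (-1 : ℝ) < 1/2 := by
    rw [Real.exp_neg]
    rw [inv_lt_comm₀ (Real.exp_pos 1) (by norm_num)]
    calc (1/2 : ℝ)⁻¹ = 2 := by norm_num
    _ < Real.exp 1 := by have := Real.exp_one_gt_d9; linarith
  have h4 : 0 < Real.exp (-1 : ℝ) := Real.exp_pos _
  have : k 2 = u 2 - 4 * Real.exp (-4 : ℝ) := by norm_num [k]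
  rw [this]
  nlinarith [mul_pos (mul_pos h4 h4) h4, mul_pos h4 h4]

-- the crossing point of k
lemma exists_b : ∃ b ∈ Icc (1/2 : ℝ) 2, k b = 0 := by
  have h1 : k (1/2) ≤ 0 := by
    have := k_anti (show (0:ℝ) ∈ Icc (0:ℝ) (1/2) by norm_num)
      (show (1/2:ℝ) ∈ Icc (0:ℝ) (1/2) by norm_num) (by norm_num)
    rw [k_zero] at this; linarith
  have h2 := k_two_pos
  have := intermediate_value_Icc (show (1/2:ℝ) ≤ 2 by norm_num) kcont.continuousOn
  have hmem : (0:ℝ) ∈ Icc (k (1/2)) (k 2) := ⟨h1, h2.le⟩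
  obtain ⟨b, hb, hkb⟩ := this hmem
  exact ⟨b, hb, hkb⟩

lemma k_nonpos_of_le (b : ℝ) (hb : b ∈ Icc (1/2 : ℝ) 2) (hkb : k b = 0)
    (x : ℝ) (hx : 0 ≤ x) (hxb : x ≤ b) : k x ≤ 0 := by
  rcases le_or_gt x (1/2) with h | h
  · have := k_anti (show (0:ℝ) ∈ Icc (0:ℝ) (1/2) by norm_num) ⟨hx, h⟩ hx
    rw [k_zero] at this; linarith
  · have := (k_mono.monotoneOn) (show x ∈ Ici (1/2:ℝ) from h.le) (show b ∈ Ici (1/2:ℝ) from hb.1) hxb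
    linarith

lemma k_nonneg_of_ge (b : ℝ) (hb : b ∈ Icc (1/2 : ℝ) 2) (hkb : k b = 0)
    (x : ℝ) (hxb : b ≤ x) : 0 ≤ k x := by
  have := (k_mono.monotoneOn) (show b ∈ Ici (1/2:ℝ) from hb.1)
    (show x ∈ Ici (1/2:ℝ) from le_trans hb.1 hxb) hxb
  linarith



lemma Fdcont : Continuous Fd :=
  continuous_iff_continuousAt.mpr fun x => (hFd x).continuousAt

lemma FdLim : Tendsto Fd atTop (𝓝 0) := by
  have h1 : Tendsto (fun y : ℝ => Real.exp (-y ^ 2) ^ 2) atTop (𝓝 0) := by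
    simpa using Elim.pow 2
  have h2 : Tendsto (fun y : ℝ => (u y) ^ 2) atTop (𝓝 (π / 4)) := by
    have := uLim.pow 2
    convert this using 2
    rw [div_pow, Real.sq_sqrt Real.pi_pos.le]
    norm_num
  have := (h1.add h2).sub_const (π / 4)
  unfold Fd; simpa using this

lemma Fd_anti (b : ℝ) (hb : b ∈ Icc (1/2 : ℝ) 2) (hkb : k b = 0) :
    AntitoneOn Fd (Icc 0 b) := by
  apply antitoneOn_of_deriv_nonpos (convex_Icc _ _) Fdcont.continuousOn
    (fun x _ => (hFd x).differentiableAt.differentiableWithinAt)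
  intro x hx
  rw [interior_Icc] at hx
  rw [(hFd x).deriv]
  have := k_nonpos_of_le b hb hkb x hx.1.le hx.2.le
  have := Real.exp_pos (-x ^ 2)
  nlinarith

lemma Fd_mono (b : ℝ) (hb : b ∈ Icc (1/2 : ℝ) 2) (hkb : k b = 0) :
    MonotoneOn Fd (Ici b) := by
  apply monotoneOn_of_deriv_nonneg (convex_Ici _) Fdcont.continuousOn
    (fun x _ => (hFd x).differentiableAt.differentiableWithinAt)
  intro x hx
  rw [interior_Ici] at hx
  rw [(hFd x).deriv]
  have := k_nonneg_of_ge b hb hkb x hx.out.le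
  have := Real.exp_pos (-x ^ 2)
  nlinarith

lemma Fd_nonpos_of_ge (b : ℝ) (hb : b ∈ Icc (1/2 : ℝ) 2) (hkb : k b = 0)
    (z : ℝ) (hz : b ≤ z) : Fd z ≤ 0 := by
  apply ge_of_tendsto FdLim
  filter_upwards [eventually_ge_atTop z] with x hx
  exact Fd_mono b hb hkb (mem_Ici.mpr hz) (mem_Ici.mpr (hz.trans hx)) hx

lemma Fd_persist (x z : ℝ) (hx : 0 ≤ x) (hFdx : Fd x < 0) (hxz : x ≤ z) : Fd z ≤ 0 := by
  obtain ⟨b, hb, hkb⟩ := exists_b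
  rcases le_or_gt b z with h | h
  · exact Fd_nonpos_of_ge b hb hkb z h
  · have hxb : x ≤ b := hxz.trans h.le
    have := Fd_anti b hb hkb ⟨hx, hxb⟩ ⟨hx.trans hxz, h.le⟩ hxz
    linarith

lemma Fcont : Continuous F :=
  continuous_iff_continuousAt.mpr fun x => (hF x).continuousAt

lemma F_zero : F 0 = 0 := by simp [F, u]

lemma FLim : Tendsto F atTop (𝓝 0) := by
  have hsq : Real.sqrt π / 2 * Real.sqrt π = π / 2 := by
    rw [div_mul_eq_mul_div, Real.mul_self_sqrt Real.pi_pos.le]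
  apply tendsto_of_tendsto_of_tendsto_of_le_of_le'
    ((Elim.const_mul (-(Real.sqrt π / 2))).mono_right (by simp))
    ((Elim.const_mul (Real.sqrt π / 2)).mono_right (by simp))
  · filter_upwards [eventually_ge_atTop (0:ℝ)] with y hy
    have h1 := tail_bound y hy
    have h2 := usplit y hy
    have h3 := unonneg y hy
    have h4 := u_le y hy
    have h5 := Real.exp_pos (-y ^ 2)
    have h6 : 0 ≤ y * ∫ t in Ioi y, Real.exp (-t ^ 2) := by
      have := G_nonneg y; positivity
    -- F y = u y * E + y*(u y^2 - π/4), and y*(π/4 - u²) = yG*(√π/2 + u) ≤ (E/2)*√π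
    have key : y * (π/4 - (u y)^2) ≤ Real.exp (-y^2) / 2 * Real.sqrt π := by
      have hπ : π / 4 - (u y)^2 = (Real.sqrt π / 2 - u y) * (Real.sqrt π / 2 + u y) := by
        have : Real.sqrt π * Real.sqrt π = π := Real.mul_self_sqrt Real.pi_pos.le
        nlinarith
      rw [hπ, ← h2]
      calc y * ((∫ t in Ioi y, Real.exp (-t ^ 2)) * (Real.sqrt π / 2 + u y))
          = (y * ∫ t in Ioi y, Real.exp (-t ^ 2)) * (Real.sqrt π / 2 + u y) := by ring
        _ ≤ (Real.exp (-y^2) / 2) * Real.sqrt π := by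
            apply mul_le_mul h1 (by linarith) (by linarith) (by positivity)
    simp only [F]
    nlinarith [mul_nonneg h3 h5.le]
  · filter_upwards [eventually_ge_atTop (0:ℝ)] with y hy
    have h3 := unonneg y hy
    have h4 := u_le y hy
    have h5 := Real.exp_pos (-y ^ 2)
    have h6 : y * ((u y)^2 - π/4) ≤ 0 := by
      have hπ : (u y)^2 ≤ π / 4 := by
        have : Real.sqrt π * Real.sqrt π = π := Real.mul_self_sqrt Real.pi_pos.le
        nlinarith
      have : (u y)^2 - π/4 ≤ 0 := by linarith
      exact mul_nonpos_of_nonneg_of_nonpos hy this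
    simp only [F]
    nlinarith

lemma F_nonneg (y : ℝ) (hy : 0 ≤ y) : 0 ≤ F y := by
  by_cases h : ∀ x ∈ Icc (0:ℝ) y, 0 ≤ Fd x
  · have hmono : MonotoneOn F (Icc 0 y) := by
      apply monotoneOn_of_deriv_nonneg (convex_Icc _ _) Fcont.continuousOn
        (fun x _ => (hF x).differentiableAt.differentiableWithinAt)
      intro x hx
      rw [interior_Icc] at hx
      rw [(hF x).deriv]
      exact h x ⟨hx.1.le, hx.2.le⟩
    have := hmono (left_mem_Icc.mpr hy) (right_mem_Icc.mpr hy) hy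
    rwa [F_zero] at this
  · push_neg at h
    obtain ⟨c, hc, hFdc⟩ := h
    have hanti : AntitoneOn F (Ici y) := by
      apply antitoneOn_of_deriv_nonpos (convex_Ici _) Fcont.continuousOn
        (fun x _ => (hF x).differentiableAt.differentiableWithinAt)
      intro x hx
      rw [interior_Ici] at hx
      rw [(hF x).deriv]
      exact Fd_persist c x hc.1 hFdc (hc.2.trans hx.out.le)
    apply le_of_tendsto FLim
    filter_upwards [eventually_ge_atTop y] with x hx
    exact hanti (mem_Ici.mpr le_rfl) (mem_Ici.mpr hx) hx


theorem F_to_goal (y : ℝ) (hy : 0 ≤ y) :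
    y * (Real.sqrt π * Real.sqrt π / 4 - (u y)^2) * Real.exp (y^2) ≤ u y := by
  have hF := F_nonneg y hy
  have hEX : Real.exp (-y^2) * Real.exp (y^2) = 1 := by rw [← Real.exp_add]; simp
  have hX : (0:ℝ) < Real.exp (y^2) := Real.exp_pos _
  have hs2 : Real.sqrt π * Real.sqrt π = π := Real.mul_self_sqrt Real.pi_pos.le
  unfold F at hF
  have h1 : y * (Real.sqrt π * Real.sqrt π / 4 - (u y)^2) ≤ u y * Real.exp (-y^2) := by
    rw [hs2]; nlinarith
  calc y * (Real.sqrt π * Real.sqrt π / 4 - (u y)^2) * Real.exp (y^2)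
      ≤ (u y * Real.exp (-y^2)) * Real.exp (y^2) := mul_le_mul_of_nonneg_right h1 hX.le
    _ = u y := by rw [mul_assoc, hEX, mul_one]


theorem stmt4 (y : ℝ) (hy : 0 ≤ y) :
    2 * Real.sqrt Real.pi * y * erfc (-y) * erfc y * Real.exp (y ^ 2) - 4 * erf y ≤ 0 := by
  have key := F_to_goal y hy
  have hs : (0:ℝ) < Real.sqrt π := Real.sqrt_pos.mpr Real.pi_pos
  rw [erfc, erfc, erf, usplit y hy, neg_split y hy]
  have hu' : (∫ t in (0:ℝ)..y, Real.exp (-t ^ 2)) = u y := rfl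
  rw [hu']
  have expand : 2 * Real.sqrt π * y * (2 / Real.sqrt π * (Real.sqrt π / 2 + u y)) *
      (2 / Real.sqrt π * (Real.sqrt π / 2 - u y)) * Real.exp (y ^ 2) - 4 * (2 / Real.sqrt π * u y)
      = (8 / Real.sqrt π) * (y * (Real.sqrt π * Real.sqrt π / 4 - (u y)^2) * Real.exp (y^2) - u y) := by
    have hs2 : Real.sqrt π * Real.sqrt π = π := Real.mul_self_sqrt Real.pi_pos.le
    field_simp
    ring
  rw [expand]
  apply mul_nonpos_of_nonneg_of_nonpos (by positivity)
  linarith
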